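/- Let ν and νₙ be Borel probability measures on S¹ and suppose there exist C' > 0 and 0 < τ < 1 such that |∫φ dν − ∫φ dνₙ| ≤ C'‖φ‖_Lip τⁿ for all Lipschitz φ : S¹ → ℝ. Assume also ν has a density bounded above by C with respect to Lebesgue measure. Then there is K > 0 such that for all n and all x ∈ [0,1], |ν([0,x]) − νₙ([0,x])| ≤ K τ^{n/2}. -/

import Mathlib

open MeasureTheory


lemma arc_norm_coe_le (u : ℝ) : ‖((u : ℝ) : AddCircle (1:ℝ))‖ ≤ |u| := by
  simpa using QuotientAddGroup.norm_mk_le_norm (S := AddSubgroup.zmultiples (1:ℝ)) (m := u)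

lemma arc_approx (ε : ℝ) (hε0 : 0 < ε) (l r : ℝ) (hlr : l ≤ r) :
    ∃ φ : AddCircle (1:ℝ) → ℝ,
      Continuous φ ∧
      (∀ a b, |φ a - φ b| ≤ (1/ε) * dist a b) ∧
      (∀ a, |φ a| ≤ 1) ∧
      (∀ y, ((fun t : ℝ => (t : AddCircle (1:ℝ))) '' Set.Icc l r).indicator 1 y ≤ φ y) ∧
      (∀ y, φ y ≤ ((fun t : ℝ => (t : AddCircle (1:ℝ))) '' Set.Icc l r).indicator 1 y
          + (Metric.closedBall ((l : ℝ) : AddCircle (1:ℝ)) ε).indicator 1 y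
          + (Metric.closedBall ((r : ℝ) : AddCircle (1:ℝ)) ε).indicator 1 y) := by
  set A : Set (AddCircle (1:ℝ)) := (fun t : ℝ => (t : AddCircle (1:ℝ))) '' Set.Icc l r with hA
  have hAne : A.Nonempty := ⟨_, ⟨l, ⟨le_refl l, hlr⟩, rfl⟩⟩
  have hAcp : IsCompact A := isCompact_Icc.image (AddCircle.continuous_mk' 1)
  refine ⟨fun y => max 0 (1 - Metric.infDist y A / ε), ?_, ?_, ?_, ?_, ?_⟩
  · exact continuous_const.max
      (continuous_const.sub ((Metric.continuous_infDist_pt A).div_const ε))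
  · intro a b
    have h1 : |Metric.infDist a A - Metric.infDist b A| ≤ dist a b := by
      rw [abs_sub_le_iff]
      constructor
      · have := Metric.infDist_le_infDist_add_dist (x := a) (y := b) (s := A)
        linarith
      · have := Metric.infDist_le_infDist_add_dist (x := b) (y := a) (s := A)
        rw [dist_comm] at this; linarith
    calc |max 0 (1 - Metric.infDist a A / ε) - max 0 (1 - Metric.infDist b A / ε)|
        ≤ |(1 - Metric.infDist a A / ε) - (1 - Metric.infDist b A / ε)| := by
          rw [max_comm 0 _, max_comm 0 (1 - Metric.infDist b A / ε)]
          exact abs_max_sub_max_le_abs _ _ _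
      _ = |Metric.infDist a A - Metric.infDist b A| / ε := by
          rw [show (1 - Metric.infDist a A / ε) - (1 - Metric.infDist b A / ε)
              = (Metric.infDist b A - Metric.infDist a A) / ε by ring,
            abs_div, abs_of_pos hε0, abs_sub_comm]
      _ ≤ dist a b / ε := by gcongr
      _ = (1/ε) * dist a b := by ring
  · intro a
    rw [abs_le]
    constructor
    · exact le_trans (by norm_num) (le_max_left _ _)
    · apply max_le (by norm_num)
      have := Metric.infDist_nonneg (s := A) (x := a)
      have : 0 ≤ Metric.infDist a A / ε := div_nonneg this hε0.le
      linarith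
  · intro y
    dsimp only
    by_cases hy : y ∈ A
    · rw [Set.indicator_of_mem hy, Metric.infDist_zero_of_mem hy]
      simp
    · rw [Set.indicator_of_notMem hy]
      exact le_max_left _ _
  · intro y
    dsimp only
    have hnn : ∀ (s : Set (AddCircle (1:ℝ))), (0:ℝ) ≤ s.indicator 1 y := fun s =>
      Set.indicator_nonneg (fun _ _ => by norm_num) y
    by_cases hbig : 1 - Metric.infDist y A / ε ≤ 0
    · have : max 0 (1 - Metric.infDist y A / ε) = 0 := max_eq_left hbig
      rw [this]
      have := hnn A; have := hnn (Metric.closedBall ((l : ℝ) : AddCircle (1:ℝ)) ε)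
      have := hnn (Metric.closedBall ((r : ℝ) : AddCircle (1:ℝ)) ε)
      linarith
    · push_neg at hbig
      have hdlt : Metric.infDist y A < ε := by
        by_contra h
        push_neg at h
        have : (1:ℝ) ≤ Metric.infDist y A / ε := (one_le_div hε0).mpr h
        linarith
      have hφle : max 0 (1 - Metric.infDist y A / ε) ≤ 1 := by
        apply max_le (by norm_num)
        have := Metric.infDist_nonneg (s := A) (x := y)
        have : 0 ≤ Metric.infDist y A / ε := div_nonneg this hε0.le
        linarith
      obtain ⟨z, hzA, hzd⟩ := hAcp.exists_infDist_eq_dist hAne y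
      obtain ⟨t, ht, rfl⟩ := hzA
      have hdist : dist y ((t : ℝ) : AddCircle (1:ℝ)) ≤ ε := by
        rw [← hzd]; exact hdlt.le
      -- geometric step
      obtain ⟨v, hv⟩ := QuotientAddGroup.mk_surjective (y - ((t : ℝ) : AddCircle (1:ℝ)))
      have hv' : ((v : ℝ) : AddCircle (1:ℝ)) = y - ((t : ℝ) : AddCircle (1:ℝ)) := hv
      set w : ℝ := v - (round v : ℤ) with hw
      have hwv : ((w : ℝ) : AddCircle (1:ℝ)) = ((v : ℝ) : AddCircle (1:ℝ)) := by
        have hz : (((round v : ℤ) : ℝ) : AddCircle (1:ℝ)) = 0 := by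
          rw [AddCircle.coe_eq_zero_iff]
          exact ⟨round v, by simp⟩
        rw [hw, AddCircle.coe_sub, hz, sub_zero]
      have hwd : |w| ≤ ε := by
        have h1 : ‖((v : ℝ) : AddCircle (1:ℝ))‖ = |w| := by
          rw [AddCircle.norm_eq]; simp [hw]
        have h2 : dist y ((t : ℝ) : AddCircle (1:ℝ)) = ‖((v : ℝ) : AddCircle (1:ℝ))‖ := by
          rw [hv', dist_eq_norm]
        rw [← h1, ← h2]; exact hdist
      have hy' : y = ((t + w : ℝ) : AddCircle (1:ℝ)) := by
        rw [AddCircle.coe_add, hwv, hv']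
        abel
      have hcase : y ∈ A ∨ dist y ((l : ℝ) : AddCircle (1:ℝ)) ≤ ε ∨
          dist y ((r : ℝ) : AddCircle (1:ℝ)) ≤ ε := by
        rcases le_or_gt l (t + w) with h0 | h0
        · rcases le_or_gt (t + w) r with h1 | h1
          · exact Or.inl ⟨t + w, ⟨h0, h1⟩, hy'.symm⟩
          · refine Or.inr (Or.inr ?_)
            have : y - ((r : ℝ) : AddCircle (1:ℝ)) = ((t + w - r : ℝ) : AddCircle (1:ℝ)) := by
              rw [hy', ← AddCircle.coe_sub]
            rw [dist_eq_norm, this]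
            refine (arc_norm_coe_le _).trans ?_
            have htr : t ≤ r := ht.2
            have hw' : w ≤ |w| := le_abs_self w
            rw [abs_of_pos (by linarith)]
            linarith
        · refine Or.inr (Or.inl ?_)
          have : y - ((l : ℝ) : AddCircle (1:ℝ)) = ((t + w - l : ℝ) : AddCircle (1:ℝ)) := by
            rw [hy', ← AddCircle.coe_sub]
          rw [dist_eq_norm, this]
          refine (arc_norm_coe_le _).trans ?_
          have htl : l ≤ t := ht.1
          have hw' : -w ≤ |w| := neg_le_abs w
          rw [abs_of_neg (by linarith)]
          linarith
      rcases hcase with h | h | h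
      · rw [Set.indicator_of_mem h]
        have := hnn (Metric.closedBall ((l : ℝ) : AddCircle (1:ℝ)) ε)
        have := hnn (Metric.closedBall ((r : ℝ) : AddCircle (1:ℝ)) ε)
        simp only [Pi.one_apply]
        linarith
      · rw [Set.indicator_of_mem (Metric.mem_closedBall.mpr h)]
        have := hnn A
        have := hnn (Metric.closedBall ((r : ℝ) : AddCircle (1:ℝ)) ε)
        simp only [Pi.one_apply]
        linarith
      · rw [Set.indicator_of_mem (Metric.mem_closedBall.mpr h)]
        have := hnn A
        have := hnn (Metric.closedBall ((l : ℝ) : AddCircle (1:ℝ)) ε)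
        simp only [Pi.one_apply]
        linarith

lemma integral_add3 {α} [MeasurableSpace α] (μ : Measure α) (f g h : α → ℝ)
    (hf : Integrable f μ) (hg : Integrable g μ) (hh : Integrable h μ) :
    ∫ a, (f a + g a + h a) ∂μ = ∫ a, f a ∂μ + ∫ a, g a ∂μ + ∫ a, h a ∂μ := by
  have h1 := integral_add (hf.add hg) hh
  simp only [Pi.add_apply] at h1
  rw [h1, integral_add hf hg]


/-- if probability measures nu_n converge to nu effectively against
Lipschitz test functions (with rate C' ‖phi‖_Lip tau^n) and nu has a density bounded by C
with respect to Lebesgue measure on the circle, then the cumulative distribution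
functions converge at rate tau^{n/2}: there is K > 0 such that for all n and x ∈ [0,1],
|nu([0,x]) - nu_n([0,x])| ≤ K tau^{n/2}. -/
theorem cdf_effective_convergence (C C' τ : ℝ)
    (hC : 0 < C) (hC' : 0 < C') (hτ0 : 0 < τ) (hτ1 : τ < 1)
    (ν : Measure (AddCircle (1 : ℝ))) (νn : ℕ → Measure (AddCircle (1 : ℝ)))
    [IsProbabilityMeasure ν] [∀ n, IsProbabilityMeasure (νn n)]
    (hconv : ∀ (n : ℕ) (φ : AddCircle (1 : ℝ) → ℝ) (K Mb : ℝ),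
      (∀ a b, |φ a - φ b| ≤ K * dist a b) → (∀ a, |φ a| ≤ Mb) →
      |(∫ a, φ a ∂ν) - ∫ a, φ a ∂(νn n)| ≤ C' * (Mb + K) * τ ^ n)
    (hdens : ∀ s : Set (AddCircle (1 : ℝ)), MeasurableSet s →
      ν s ≤ ENNReal.ofReal C * volume s) :
    ∃ K > 0, ∀ (n : ℕ) (x : ℝ), x ∈ Set.Icc (0 : ℝ) 1 →
      |(ν ((fun t : ℝ => (t : AddCircle (1 : ℝ))) '' Set.Icc 0 x)).toReal -
          ((νn n) ((fun t : ℝ => (t : AddCircle (1 : ℝ))) '' Set.Icc 0 x)).toReal| ≤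
        K * τ ^ ((n : ℝ) / 2) := by
  haveI : Fact ((0:ℝ) < 1) := ⟨one_pos⟩
  refine ⟨4 * C + 2 * C', by positivity, ?_⟩
  intro n x hx
  set ε : ℝ := τ ^ ((n : ℝ) / 2) with hεdef
  have hε0 : 0 < ε := Real.rpow_pos_of_pos hτ0 _
  have hε1 : ε ≤ 1 := Real.rpow_le_one hτ0.le hτ1.le (by positivity)
  have hτn : τ ^ n = ε * ε := by
    rw [hεdef, ← Real.rpow_add hτ0]
    rw [show (n:ℝ)/2 + (n:ℝ)/2 = (n:ℝ) by ring, Real.rpow_natCast]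
  -- measure of closed balls under ν
  have hball : ∀ z : AddCircle (1:ℝ), (ν (Metric.closedBall z ε)).toReal ≤ 2 * C * ε := by
    intro z
    have h1 := hdens _ (measurableSet_closedBall (x := z) (ε := ε))
    rw [AddCircle.volume_closedBall] at h1
    have h2 : ν (Metric.closedBall z ε) ≤ ENNReal.ofReal (C * (2 * ε)) := by
      refine h1.trans ?_
      rw [← ENNReal.ofReal_mul hC.le]
      exact ENNReal.ofReal_le_ofReal (by
        have := min_le_right (1:ℝ) (2*ε)
        nlinarith)
    have := ENNReal.toReal_mono (by simp) h2
    rw [ENNReal.toReal_ofReal (by positivity)] at this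
    linarith
  have hsing : ∀ z : AddCircle (1:ℝ), ν {z} = 0 := by
    intro z
    have h1 := hdens _ (measurableSet_singleton z)
    rw [← Metric.closedBall_zero, AddCircle.volume_closedBall] at h1
    simpa using h1
  -- main arc estimate
  have harc : ∀ l r : ℝ, l ≤ r →
      ((νn n) ((fun t : ℝ => (t : AddCircle (1:ℝ))) '' Set.Icc l r)).toReal ≤
      (ν ((fun t : ℝ => (t : AddCircle (1:ℝ))) '' Set.Icc l r)).toReal
        + 4 * C * ε + C' * (1 + 1/ε) * τ ^ n := by
    intro l r hlr
    obtain ⟨φ, hcont, hlip, hbd, hlow, hupp⟩ := arc_approx ε hε0 l r hlr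
    set A : Set (AddCircle (1:ℝ)) := (fun t : ℝ => (t : AddCircle (1:ℝ))) '' Set.Icc l r with hA
    have hAm : MeasurableSet A :=
      (isCompact_Icc.image (AddCircle.continuous_mk' 1)).isClosed.measurableSet
    have hφint : ∀ (μ : Measure (AddCircle (1:ℝ))) [IsProbabilityMeasure μ], Integrable φ μ := by
      intro μ _
      exact (integrable_const 1).mono' hcont.aestronglyMeasurable
        (Filter.Eventually.of_forall fun a => by rw [Real.norm_eq_abs]; exact hbd a)
    have hindint : ∀ (μ : Measure (AddCircle (1:ℝ))) [IsProbabilityMeasure μ]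
        (s : Set (AddCircle (1:ℝ))), MeasurableSet s →
        Integrable (s.indicator (1 : AddCircle (1:ℝ) → ℝ)) μ := by
      intro μ _ s hs
      exact (integrable_const 1).indicator hs
    have hB0m : MeasurableSet (Metric.closedBall ((l:ℝ) : AddCircle (1:ℝ)) ε) :=
      measurableSet_closedBall
    have hB1m : MeasurableSet (Metric.closedBall ((r:ℝ) : AddCircle (1:ℝ)) ε) :=
      measurableSet_closedBall
    have step1 : ((νn n) A).toReal ≤ ∫ a, φ a ∂(νn n) := by
      rw [← measureReal_def, ← integral_indicator_one hAm]
      exact integral_mono (hindint _ _ hAm) (hφint _) hlow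
    have step2 : ∫ a, φ a ∂ν ≤ (ν A).toReal + 4 * C * ε := by
      have h3 : ∫ a, φ a ∂ν ≤ ∫ a, (A.indicator 1 a
          + (Metric.closedBall ((l:ℝ) : AddCircle (1:ℝ)) ε).indicator 1 a
          + (Metric.closedBall ((r:ℝ) : AddCircle (1:ℝ)) ε).indicator 1 a) ∂ν := by
        refine integral_mono (hφint _) ?_ hupp
        exact ((hindint ν _ hAm).add (hindint ν _ hB0m)).add (hindint ν _ hB1m)
      rw [integral_add3 ν _ _ _ (hindint ν _ hAm) (hindint ν _ hB0m) (hindint ν _ hB1m),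
        integral_indicator_one hAm, integral_indicator_one hB0m,
        integral_indicator_one hB1m] at h3
      have hb0 := hball ((l:ℝ) : AddCircle (1:ℝ))
      have hb1 := hball ((r:ℝ) : AddCircle (1:ℝ))
      simp only [measureReal_def] at h3
      linarith
    have step3 := hconv n φ (1/ε) 1 hlip hbd
    have : ∫ a, φ a ∂(νn n) ≤ ∫ a, φ a ∂ν + C' * (1 + 1/ε) * τ ^ n := by
      have := abs_le.mp step3
      linarith [this.1]
    linarith
  set A : Set (AddCircle (1:ℝ)) := (fun t : ℝ => (t : AddCircle (1:ℝ))) '' Set.Icc 0 x with hA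
  set A' : Set (AddCircle (1:ℝ)) := (fun t : ℝ => (t : AddCircle (1:ℝ))) '' Set.Icc x 1 with hA'
  have hAm : MeasurableSet A :=
    (isCompact_Icc.image (AddCircle.continuous_mk' 1)).isClosed.measurableSet
  have h1 := harc 0 x hx.1
  have h2 := harc x 1 hx.2
  rw [← hA] at h1
  rw [← hA'] at h2
  -- complement relations
  have hsub1 : Aᶜ ⊆ A' := by
    intro y hy
    have : y ∈ ((fun t : ℝ => (t : AddCircle (1:ℝ))) '' Set.Ico 0 (0 + 1)) := by
      rw [AddCircle.coe_image_Ico_eq]; trivial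
    obtain ⟨c, hc, rfl⟩ := this
    rw [zero_add] at hc
    rcases le_or_gt c x with h | h
    · exact absurd ⟨c, ⟨hc.1, h⟩, rfl⟩ hy
    · exact ⟨c, ⟨h.le, hc.2.le⟩, rfl⟩
  have hsub2 : A' ⊆ Aᶜ ∪ {((0:ℝ) : AddCircle (1:ℝ))} ∪ {((x:ℝ) : AddCircle (1:ℝ))} := by
    rintro y ⟨c, hc, rfl⟩
    by_cases hmem : ((c:ℝ) : AddCircle (1:ℝ)) ∈ A
    · obtain ⟨d, hd, hdc⟩ := hmem
      have hdc' : ((d:ℝ) : AddCircle (1:ℝ)) = ((c:ℝ) : AddCircle (1:ℝ)) := hdc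
      have hz : ((c - d : ℝ) : AddCircle (1:ℝ)) = 0 := by
        rw [AddCircle.coe_sub, hdc', sub_self]
      rw [AddCircle.coe_eq_zero_iff] at hz
      obtain ⟨m, hm⟩ := hz
      have hm' : (m : ℝ) = c - d := by simpa using hm
      have hd0 : 0 ≤ d := hd.1
      have hdx : d ≤ x := hd.2
      have hcx : x ≤ c := hc.1
      have hc1 : c ≤ 1 := hc.2
      have hmrange : (0:ℝ) ≤ (m:ℝ) ∧ (m:ℝ) ≤ 1 := by constructor <;> linarith
      have : m = 0 ∨ m = 1 := by
        rcases hmrange with ⟨h0', h1'⟩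
        have : (0:ℤ) ≤ m := by exact_mod_cast h0'
        have : m ≤ 1 := by exact_mod_cast h1'
        omega
      rcases this with rfl | rfl
      · -- c = d, so c = x
        push_cast at hm'
        have hcx' : c = x := le_antisymm (by linarith) hcx
        right
        show ((c:ℝ) : AddCircle (1:ℝ)) ∈ {((x:ℝ) : AddCircle (1:ℝ))}
        rw [hcx']
        exact rfl
      · -- c = d + 1, so c = 1
        push_cast at hm'
        have hc1' : c = 1 := by linarith
        left; right
        show ((c:ℝ) : AddCircle (1:ℝ)) ∈ {((0:ℝ) : AddCircle (1:ℝ))}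
        rw [hc1']
        have h10 : ((1:ℝ) : AddCircle (1:ℝ)) = ((0:ℝ) : AddCircle (1:ℝ)) := by
          rw [AddCircle.coe_period]
          norm_cast
        rw [h10]
        exact rfl
    · left; left; exact hmem
  -- measure of A' vs complement of A
  have hfin : ∀ (μ : Measure (AddCircle (1:ℝ))) [IsProbabilityMeasure μ]
      (s : Set (AddCircle (1:ℝ))), μ s ≠ ⊤ := fun μ _ s => measure_ne_top μ s
  have hcompl : ∀ (μ : Measure (AddCircle (1:ℝ))) [IsProbabilityMeasure μ],
      (μ Aᶜ).toReal = 1 - (μ A).toReal := by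
    intro μ _
    rw [measure_compl hAm (hfin μ A), measure_univ,
      ENNReal.toReal_sub_of_le prob_le_one (by simp)]
    simp
  have hA'le : (ν A').toReal ≤ (ν Aᶜ).toReal := by
    have h3 : ν A' ≤ ν Aᶜ + ν {((0:ℝ) : AddCircle (1:ℝ))} + ν {((x:ℝ) : AddCircle (1:ℝ))} := by
      calc ν A' ≤ ν (Aᶜ ∪ {((0:ℝ) : AddCircle (1:ℝ))} ∪ {((x:ℝ) : AddCircle (1:ℝ))}) :=
            measure_mono hsub2
        _ ≤ ν (Aᶜ ∪ {((0:ℝ) : AddCircle (1:ℝ))}) + ν {((x:ℝ) : AddCircle (1:ℝ))} :=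
            measure_union_le _ _
        _ ≤ ν Aᶜ + ν {((0:ℝ) : AddCircle (1:ℝ))} + ν {((x:ℝ) : AddCircle (1:ℝ))} := by
            gcongr
            exact measure_union_le _ _
    rw [hsing, hsing, add_zero, add_zero] at h3
    exact ENNReal.toReal_mono (hfin ν Aᶜ) h3
  have hAcle : ((νn n) Aᶜ).toReal ≤ ((νn n) A').toReal :=
    ENNReal.toReal_mono (hfin _ A') (measure_mono hsub1)
  -- combine
  have hup : ((νn n) A).toReal - (ν A).toReal ≤ 4 * C * ε + C' * (1 + 1/ε) * τ ^ n := by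
    linarith
  have hdown : (ν A).toReal - ((νn n) A).toReal ≤ 4 * C * ε + C' * (1 + 1/ε) * τ ^ n := by
    have e1 := hcompl ν
    have e2 := hcompl (νn n)
    linarith
  have hD : C' * (1 + 1/ε) * τ ^ n ≤ 2 * C' * ε := by
    rw [hτn]
    have h1 : (1 + 1/ε) * (ε * ε) = ε * ε + ε := by field_simp
    have h2 : ε * ε ≤ ε := by nlinarith
    nlinarith
  rw [abs_sub_le_iff]
  constructor <;> nlinarith
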